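/- For n ≥ 1 an integer, the function Q_n(z) = (1/p)(1 - (1-p)^{1-1/n}(1-pz)^{1/n}), with p ∈ (0,1), is a probability generating function: its Taylor coefficients at z = 0 are nonnegative and Q_n(1) = 1. -/

import Mathlib

open Real

/-- Generalized binomial coefficient `C(α, k)`. -/
private noncomputable def binc (α : ℝ) : ℕ → ℝ :=
  fun k => ∏ i ∈ Finset.range k, ((α - i) / (i + 1))

private lemma binc_zero (α : ℝ) : binc α 0 = 1 := by simp [binc]

private lemma binc_succ (α : ℝ) (k : ℕ) :
    binc α (k + 1) = binc α k * ((α - k) / (k + 1)) := by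
  simp only [binc, Finset.prod_range_succ]

private lemma binc_abs_le (α : ℝ) (h0 : 0 < α) (h1 : α ≤ 1) (k : ℕ) : |binc α k| ≤ 1 := by
  induction k with
  | zero => simp [binc_zero]
  | succ k ih =>
    rw [binc_succ, abs_mul]
    have hk0 : (0:ℝ) ≤ (k:ℝ) := Nat.cast_nonneg k
    have hfac : |(α - k) / (k + 1)| ≤ 1 := by
      rw [abs_div, abs_of_pos (by positivity : (0:ℝ) < (k:ℝ) + 1),
        div_le_one (by positivity)]
      rw [abs_le]
      constructor <;> linarith
    calc |binc α k| * |(α - k) / (k + 1)| ≤ 1 * 1 :=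
          mul_le_mul ih hfac (abs_nonneg _) zero_le_one
      _ = 1 := by ring

private lemma binc_sign (α : ℝ) (h0 : 0 < α) (h1 : α ≤ 1) (k : ℕ) :
    0 ≤ (-1 : ℝ) ^ k * binc α (k + 1) := by
  induction k with
  | zero =>
    simp [binc_succ, binc_zero]
    linarith
  | succ k ih =>
    have hk0 : (0:ℝ) ≤ (k:ℝ) := Nat.cast_nonneg k
    have h : (-1 : ℝ) ^ (k+1) * binc α (k + 2) =
        ((-1 : ℝ) ^ k * binc α (k + 1)) * ((((k:ℝ)+1) - α) / ((k:ℝ) + 2)) := by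
      rw [binc_succ]
      push_cast
      ring
    rw [h]
    exact mul_nonneg ih (div_nonneg (by linarith) (by linarith))

private lemma binc_summable (α : ℝ) (h0 : 0 < α) (h1 : α ≤ 1) {x : ℝ} (hx : |x| < 1) :
    Summable fun k => binc α k * x ^ k := by
  apply Summable.of_norm_bounded (summable_geometric_of_lt_one (abs_nonneg x) hx)
  intro k
  rw [norm_mul, norm_pow, Real.norm_eq_abs, Real.norm_eq_abs]
  exact mul_le_of_le_one_left (pow_nonneg (abs_nonneg x) k) (binc_abs_le α h0 h1 k)

private lemma summable_kr {r : ℝ} (hr : 0 ≤ r) (hr1 : r < 1) :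
    Summable fun k : ℕ => ((k : ℝ) + 1) * r ^ k := by
  have h1 := summable_pow_mul_geometric_of_norm_lt_one (R := ℝ) 1
    (by rwa [Real.norm_eq_abs, abs_of_nonneg hr])
  have h2 : Summable fun k : ℕ => r ^ k := summable_geometric_of_lt_one hr hr1
  have := h1.add h2
  apply this.congr
  intro k
  simp [add_mul]

private lemma summable_kr' {r : ℝ} (hr : 0 ≤ r) (hr1 : r < 1) :
    Summable fun k : ℕ => (k : ℝ) * r ^ (k - 1) := by
  refine (summable_nat_add_iff 1).1 ((summable_kr hr hr1).congr fun k => ?_)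
  push_cast [Nat.add_sub_cancel]
  ring

private lemma f_hasDerivAt (α : ℝ) (h0 : 0 < α) (h1 : α ≤ 1) {x : ℝ} (hx : |x| < 1) :
    HasDerivAt (fun y => ∑' k, binc α k * y ^ k)
      (∑' k, binc α k * ((k : ℝ) * x ^ (k - 1))) x := by
  set r : ℝ := (1 + |x|) / 2 with hr
  have hr0 : 0 ≤ r := by positivity
  have hxr : |x| < r := by rw [hr]; linarith
  have hr1 : r < 1 := by rw [hr]; linarith
  refine hasDerivAt_tsum_of_isPreconnected (𝕜 := ℝ) (F := ℝ)
    (g := fun (k : ℕ) (y : ℝ) => binc α k * y ^ k)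
    (g' := fun (k : ℕ) (y : ℝ) => binc α k * ((k : ℝ) * y ^ (k - 1)))
    (u := fun k : ℕ => (k : ℝ) * r ^ (k - 1))
    (summable_kr' hr0 hr1) (isOpen_Ioo (a := -r) (b := r))
    ((convex_Ioo _ _).isPreconnected) (fun k y _ => ?_) (fun k y hy => ?_)
    (y₀ := 0) ?_ ?_ ?_
  · exact (hasDerivAt_pow k y).const_mul (binc α k)
  · have hyr : |y| < r := abs_lt.2 ⟨hy.1, hy.2⟩
    rw [Real.norm_eq_abs, abs_mul, abs_mul, abs_pow]
    calc |binc α k| * (|(k:ℝ)| * |y| ^ (k-1)) ≤ 1 * (|(k:ℝ)| * r ^ (k-1)) := by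
          apply mul_le_mul (binc_abs_le α h0 h1 k) _ (by positivity) zero_le_one
          exact mul_le_mul_of_nonneg_left
            (pow_le_pow_left₀ (abs_nonneg y) hyr.le _) (abs_nonneg _)
      _ = (k:ℝ) * r ^ (k-1) := by rw [abs_of_nonneg (Nat.cast_nonneg k)]; ring
  · exact Set.mem_Ioo.2 ⟨by linarith [abs_nonneg x], by linarith [abs_nonneg x]⟩
  · apply summable_of_ne_finset_zero (s := {0})
    intro k hk
    simp only [Finset.mem_singleton] at hk
    simp [zero_pow hk]
  · exact Set.mem_Ioo.2 ⟨neg_lt_of_abs_lt hxr, lt_of_abs_lt hxr⟩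

private lemma f_ode (α : ℝ) (h0 : 0 < α) (h1 : α ≤ 1) {x : ℝ} (hx : |x| < 1) :
    (1 + x) * (∑' k, binc α k * ((k : ℝ) * x ^ (k - 1)))
      = α * ∑' k, binc α k * x ^ k := by
  set c := binc α with hc
  have S0 : Summable fun k => c k * x ^ k := binc_summable α h0 h1 hx
  have S1 : Summable fun k => c k * ((k : ℝ) * x ^ (k - 1)) := by
    apply Summable.of_norm_bounded (summable_kr' (abs_nonneg x) hx)
    intro k
    rw [Real.norm_eq_abs, abs_mul, abs_mul, abs_pow]
    calc |c k| * (|(k:ℝ)| * |x| ^ (k-1)) ≤ 1 * (|(k:ℝ)| * |x| ^ (k-1)) :=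
          mul_le_mul_of_nonneg_right (binc_abs_le α h0 h1 k) (by positivity)
      _ = (k:ℝ) * |x| ^ (k-1) := by rw [abs_of_nonneg (Nat.cast_nonneg k)]; ring
  set T1 := ∑' k, c k * ((k : ℝ) * x ^ (k - 1)) with hT1
  have h1' : HasSum (fun k => c (k+1) * (((k:ℝ)+1) * x ^ k)) T1 := by
    have hs : HasSum (fun k => c k * ((k:ℝ) * x ^ (k-1)))
        (T1 + ∑ i ∈ Finset.range 1, c i * ((i:ℝ) * x ^ (i-1))) := by
      simpa using S1.hasSum
    refine ((hasSum_nat_add_iff 1).2 hs).congr_fun fun k => ?_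
    push_cast [Nat.add_sub_cancel]
    ring
  have h2 : HasSum (fun k => c k * ((k:ℝ) * x ^ k)) (x * T1) := by
    refine (S1.hasSum.mul_left x).congr_fun fun k => ?_
    cases k with
    | zero => simp
    | succ m =>
      rw [Nat.add_sub_cancel]
      push_cast
      ring
  have h3 := h1'.add h2
  have h4 : HasSum (fun k => α * (c k * x ^ k)) (T1 + x * T1) := by
    refine h3.congr_fun fun k => ?_
    have hk1 : ((k:ℝ) + 1) ≠ 0 := by positivity
    rw [hc, binc_succ]
    field_simp
    ring
  have h5 := S0.hasSum.mul_left α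
  have hfin := h5.unique h4
  linear_combination -hfin

private lemma f_pow (n : ℕ) (hn : 1 ≤ n) {x : ℝ} (hx : |x| < 1) :
    (∑' k, binc ((n:ℝ)⁻¹) k * x ^ k) ^ n = 1 + x := by
  have hn0 : (n:ℝ) ≠ 0 := by positivity
  have h0 : 0 < ((n:ℝ)⁻¹) := by positivity
  have h1 : ((n:ℝ)⁻¹) ≤ 1 :=
    inv_le_one_of_one_le₀ (by exact_mod_cast hn)
  set α := ((n:ℝ)⁻¹) with hα
  set f : ℝ → ℝ := fun y => ∑' k, binc α k * y ^ k with hf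
  set F : ℝ → ℝ := fun y => (f y) ^ n / (1 + y) with hF
  have hFderiv : ∀ y ∈ Set.Ioo (-1 : ℝ) 1, HasDerivAt F 0 y := by
    intro y hy
    have hy1 : (0:ℝ) < 1 + y := by linarith [hy.1]
    have hyabs : |y| < 1 := abs_lt.2 ⟨hy.1, hy.2⟩
    have hd := f_hasDerivAt α h0 h1 hyabs
    have hode := f_ode α h0 h1 hyabs
    set D := ∑' k, binc α k * ((k : ℝ) * y ^ (k - 1)) with hD
    have hdF : HasDerivAt F
        ((((n:ℝ) * (f y) ^ (n-1) * D) * (1 + y) - (f y) ^ n * 1) / (1 + y) ^ 2) y := by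
      exact ((hd.pow n).div ((hasDerivAt_id y).const_add 1) (ne_of_gt hy1))
    have hnum : (((n:ℝ) * (f y) ^ (n-1) * D) * (1 + y) - (f y) ^ n * 1) = 0 := by
      have hfy : (f y) ^ (n-1) * f y = (f y) ^ n := by
        rw [← pow_succ]
        congr 1
        omega
      have hre : ((n:ℝ) * (f y) ^ (n-1) * D) * (1 + y)
          = (n:ℝ) * (f y) ^ (n-1) * ((1 + y) * D) := by ring
      rw [hre, hode, show (n:ℝ) * (f y)^(n-1) * (α * f y)
          = ((n:ℝ) * α) * ((f y)^(n-1) * f y) by ring, hfy, hα,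
        mul_inv_cancel₀ hn0]
      ring
    rw [hnum] at hdF
    simpa using hdF
  have hf0 : f 0 = 1 := by
    rw [hf]
    simp only []
    rw [tsum_eq_single 0 (fun k hk => by simp [zero_pow hk])]
    simp [binc_zero]
  have hFconst : ∀ x' ∈ Set.Ioo (-1:ℝ) 1, F x' = F 0 := by
    intro x' hx'
    rcases le_or_gt x' 0 with h | h
    · have hsub : Set.Icc x' 0 ⊆ Set.Ioo (-1:ℝ) 1 := fun y hy =>
        ⟨lt_of_lt_of_le hx'.1 hy.1, lt_of_le_of_lt hy.2 one_pos⟩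
      have hcst := constant_of_has_deriv_right_zero
        (f := F) (a := x') (b := 0)
        (fun y hy => ((hFderiv y (hsub hy)).continuousAt).continuousWithinAt)
        (fun y hy => ((hFderiv y (hsub (Set.Ico_subset_Icc_self hy))).hasDerivWithinAt))
      have h0' := hcst 0 (Set.right_mem_Icc.2 h)
      linarith [h0']
    · have hsub : Set.Icc 0 x' ⊆ Set.Ioo (-1:ℝ) 1 := fun y hy =>
        ⟨lt_of_lt_of_le (by norm_num) hy.1, lt_of_le_of_lt hy.2 hx'.2⟩
      have hcst := constant_of_has_deriv_right_zero
        (f := F) (a := 0) (b := x')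
        (fun y hy => ((hFderiv y (hsub hy)).continuousAt).continuousWithinAt)
        (fun y hy => ((hFderiv y (hsub (Set.Ico_subset_Icc_self hy))).hasDerivWithinAt))
      exact hcst x' (Set.right_mem_Icc.2 h.le)
  have hxmem : x ∈ Set.Ioo (-1:ℝ) 1 := ⟨neg_lt_of_abs_lt hx, lt_of_abs_lt hx⟩
  have hx1 : (0:ℝ) < 1 + x := by linarith [hxmem.1]
  have hcx := hFconst x hxmem
  rw [hF] at hcx
  simp only [hf0, one_pow, add_zero, div_one] at hcx
  rw [div_eq_one_iff_eq (ne_of_gt hx1)] at hcx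
  exact hcx

private lemma f_eq (n : ℕ) (hn : 1 ≤ n) {x : ℝ} (hx : |x| < 1) :
    (∑' k, binc ((n:ℝ)⁻¹) k * x ^ k) = (1 + x) ^ ((n:ℝ)⁻¹) := by
  have hn0 : n ≠ 0 := by omega
  have h0 : 0 < ((n:ℝ)⁻¹) := by positivity
  have h1 : ((n:ℝ)⁻¹) ≤ 1 :=
    inv_le_one_of_one_le₀ (by exact_mod_cast hn)
  set α := ((n:ℝ)⁻¹) with hα
  set f : ℝ → ℝ := fun y => ∑' k, binc α k * y ^ k with hf
  have hx1 : (0:ℝ) < 1 + x := by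
    have h := abs_lt.1 hx; linarith [h.1]
  have hpow : (f x) ^ n = 1 + x := f_pow n hn hx
  have hf0 : f 0 = 1 := by
    rw [hf]
    simp only []
    rw [tsum_eq_single 0 (fun k hk => by simp [zero_pow hk])]
    simp [binc_zero]
  have hfpos : 0 < f x := by
    by_contra hcon
    push_neg at hcon
    have hne : f x ≠ 0 := by
      intro h
      rw [h, zero_pow hn0] at hpow
      linarith
    have hneg : f x < 0 := lt_of_le_of_ne hcon hne
    have hsub : Set.uIcc x 0 ⊆ Set.Ioo (-1:ℝ) 1 :=
      Set.ordConnected_Ioo.uIcc_subset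
        ⟨neg_lt_of_abs_lt hx, lt_of_abs_lt hx⟩ (by norm_num)
    have hcont : ContinuousOn f (Set.uIcc x 0) := fun y hy => by
      have hyabs : |y| < 1 := abs_lt.2 ⟨(hsub hy).1, (hsub hy).2⟩
      exact ((f_hasDerivAt α h0 h1 hyabs).continuousAt).continuousWithinAt
    have hmem : (0:ℝ) ∈ Set.uIcc (f x) (f 0) := by
      rw [hf0]
      exact Set.mem_uIcc.2 (Or.inl ⟨hneg.le, zero_le_one⟩)
    obtain ⟨y, hy, hfy⟩ := intermediate_value_uIcc hcont hmem
    have hyabs : |y| < 1 := abs_lt.2 ⟨(hsub hy).1, (hsub hy).2⟩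
    have hy1 : (0:ℝ) < 1 + y := by
      have h := abs_lt.1 hyabs; linarith [h.1]
    have hpy := f_pow n hn hyabs
    rw [show (∑' k, binc ((n:ℝ)⁻¹) k * y ^ k) = f y from rfl, hfy,
      zero_pow hn0] at hpy
    linarith
  have hrpow : ((1 + x) ^ α) ^ n = 1 + x := by
    rw [hα]
    exact Real.rpow_inv_natCast_pow hx1.le hn0
  have hkey : (f x) ^ n = ((1 + x) ^ α) ^ n := by rw [hpow, hrpow]
  exact (pow_left_inj₀ hfpos.le (Real.rpow_nonneg hx1.le _) hn0).1 hkey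

/-- For `n ≥ 1` and `p ∈ (0,1)`, the function
`Q_n z = (1/p)(1 - (1-p)^(1-1/n) (1-pz)^(1/n))` is a probability generating function:
it is given on `[0,1]` by a power series with nonnegative coefficients, the coefficients
sum to `1`, and `Q_n 1 = 1`. -/
theorem geometric_normalizer_is_pgf (p : ℝ) (hp : p ∈ Set.Ioo (0 : ℝ) 1) (n : ℕ) (hn : 1 ≤ n) :
    (∃ b : ℕ → ℝ, (∀ k, 0 ≤ b k) ∧ Summable b ∧ (∑' k, b k) = 1 ∧
      ∀ z ∈ Set.Icc (0 : ℝ) 1,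
        (1 / p) * (1 - (1 - p) ^ (1 - (1 : ℝ) / n) * (1 - p * z) ^ ((1 : ℝ) / n))
          = ∑' k, b k * z ^ k) ∧
    (1 / p) * (1 - (1 - p) ^ (1 - (1 : ℝ) / n) * (1 - p * 1) ^ ((1 : ℝ) / n)) = 1 := by
  obtain ⟨hp0, hp1⟩ := hp
  have hn0 : (n:ℝ) ≠ 0 := by positivity
  have hα0 : 0 < ((n:ℝ)⁻¹) := by positivity
  have hα1 : ((n:ℝ)⁻¹) ≤ 1 :=
    inv_le_one_of_one_le₀ (by exact_mod_cast hn)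
  set α := ((n:ℝ)⁻¹) with hα
  set q := 1 - p with hq
  have hq0 : 0 < q := by rw [hq]; linarith
  have hq1 : q < 1 := by rw [hq]; linarith
  set e : ℝ := 1 - (1:ℝ)/n with he
  have he0 : 0 ≤ e := by
    rw [he, one_div]
    linarith
  have hQ1 : (1 / p) * (1 - q ^ e * (1 - p * 1) ^ ((1 : ℝ) / n)) = 1 := by
    have h1 : (1 : ℝ) - p * 1 = q := by rw [hq]; ring
    rw [h1, ← Real.rpow_add hq0, he]
    rw [show (1 - (1:ℝ)/n) + (1:ℝ)/n = 1 by ring, Real.rpow_one, hq]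
    field_simp
    ring
  have key : ∀ z ∈ Set.Icc (0:ℝ) 1,
      HasSum (fun k => binc α k * (-(p * z)) ^ k) ((1 - p * z) ^ ((1 : ℝ) / n)) := by
    intro z hz
    have habs : |(-(p * z))| < 1 := by
      rw [abs_neg, abs_of_nonneg (by nlinarith [hz.1] : (0:ℝ) ≤ p * z)]
      nlinarith [hz.1, hz.2]
    have h := (binc_summable α hα0 hα1 habs).hasSum
    rwa [show (∑' k, binc α k * (-(p*z)) ^ k)
        = ∑' k, binc ((n:ℝ)⁻¹) k * (-(p*z)) ^ k from rfl,
      f_eq n hn habs, show (1:ℝ) + -(p * z) = 1 - p * z by ring, ← one_div] at h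
  set b : ℕ → ℝ := fun k => if k = 0 then (1/p) * (1 - q ^ e)
    else (1/p) * q ^ e * ((-1:ℝ)^(k+1) * binc α k * p ^ k) with hb
  have hbnonneg : ∀ k, 0 ≤ b k := by
    intro k
    simp only [hb]
    cases k with
    | zero =>
      rw [if_pos rfl]
      have hle : q ^ e ≤ 1 := Real.rpow_le_one hq0.le hq1.le he0
      have h1p : 0 < 1/p := by positivity
      nlinarith
    | succ m =>
      rw [if_neg (Nat.succ_ne_zero m)]
      have hs := binc_sign α hα0 hα1 m
      have h1 : (0:ℝ) ≤ (-1:ℝ)^(m+1+1) * binc α (m+1) := by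
        have hpo : (-1:ℝ)^(m+1+1) = (-1:ℝ)^m := by
          rw [pow_succ, pow_succ]; ring
        rw [hpo]; exact hs
      have hqe : (0:ℝ) ≤ q ^ e := Real.rpow_nonneg hq0.le e
      refine mul_nonneg (mul_nonneg (by positivity) hqe)
        (mul_nonneg h1 (by positivity))
  have hQsum : ∀ z ∈ Set.Icc (0:ℝ) 1,
      HasSum (fun k => b k * z ^ k)
        ((1 / p) * (1 - q ^ e * (1 - p * z) ^ ((1 : ℝ) / n))) := by
    intro z hz
    have hS := (key z hz).mul_left (-((1/p) * q ^ e))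
    have hone : HasSum (fun k : ℕ => if k = 0 then (1/p : ℝ) else 0) (1/p) :=
      hasSum_ite_eq 0 (1/p)
    have hadd := hone.add hS
    have hfun : ∀ k, b k * z ^ k =
        (if k = 0 then (1/p : ℝ) else 0)
          + (-((1/p) * q ^ e)) * (binc α k * (-(p * z)) ^ k) := by
      intro k
      simp only [hb]
      cases k with
      | zero =>
        rw [if_pos rfl, if_pos rfl]
        simp only [pow_zero, binc_zero]
        ring
      | succ m =>
        rw [if_neg (Nat.succ_ne_zero m), if_neg (Nat.succ_ne_zero m)]
        have hs1 : (-1:ℝ)^(m+1+1) = (-1:ℝ)^m := by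
          rw [pow_succ, pow_succ]; ring
        have hs2 : (-(p*z))^(m+1) = (-1:ℝ)^m * -((p*z)^(m+1)) := by
          rw [neg_pow, pow_succ]; ring
        rw [hs1, hs2]
        ring
    have hres := hadd.congr_fun hfun
    have hval : (1/p : ℝ) + (-((1/p) * q ^ e)) * ((1 - p * z) ^ ((1 : ℝ) / n))
        = (1 / p) * (1 - q ^ e * (1 - p * z) ^ ((1 : ℝ) / n)) := by ring
    rwa [hval] at hres
  have h1mem : (1:ℝ) ∈ Set.Icc (0:ℝ) 1 := by norm_num
  have hb1 := hQsum 1 h1mem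
  rw [hQ1] at hb1
  have hbsum : HasSum b 1 := hb1.congr_fun fun k => by rw [one_pow, mul_one]
  refine ⟨⟨b, hbnonneg, hbsum.summable, hbsum.tsum_eq, ?_⟩, hQ1⟩
  intro z hz
  exact ((hQsum z hz).tsum_eq).symm
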